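/- Let k be a commutative ring, T a finite lattice, n ≥ 0, and B = (b_0, …, b_{n-1}) a strictly increasing n-tuple with 0̂ ≤ b_0 < b_1 < ⋯ < b_{n-1} < b_n := 1̂ in T. Let n̄ = {0 < 1 < ⋯ < n}, let π^B : T → n̄ be defined by π^B(t) = the least h with t ≤ b_h, and for each n-tuple A = (a_1, …, a_n) with a_h ∈ [b_{h-1}, b_h] for all h, let j_A^B : n̄ → T be defined by j_A^B(0) = 0̂ and j_A^B(h) = a_h for h ≥ 1, and set μ(B,A) = ∏_{h=1}^n μ_T(b_{h-1}, a_h), where μ_T is the Möbius function of T. For Y ⊆ {1,…,n}, let ρ_Y : n̄ → n̄ be given by ρ_Y(0) = 0, ρ_Y(h) = h if h ∈ Y, and ρ_Y(h) = h-1 if h ∉ Y. Then: (i) in the free k-module on the set of join-preserving maps n̄ → n̄, ∑_A μ(B,A)·(π^B ∘ j_A^B) = ∑_{Y ⊆ {1,…,n}} (-1)^{|Y|}·ρ_Y, the first sum running over all n-tuples A as above; (ii) the element (-1)^n ∑_A μ(B,A)·(j_A^B ∘ π^B) of the monoid algebra k[M], where M is the monoid of join-preserving maps T → T under composition, is idempotent.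 -/

import Mathlib

open scoped Classical

/-- `π^B : T → {0,…,n}`, sending `t` to the least `h` with `t ≤ b_h`
(where `b_n = 1̂`). -/
noncomputable def piB {T : Type*} [Lattice T] [Fintype T] [BoundedOrder T] {n : ℕ}
    (b : Fin (n + 1) → T) (htop : b (Fin.last n) = ⊤) (t : T) : Fin (n + 1) :=
  (Finset.univ.filter fun h => t ≤ b h).min'
    ⟨Fin.last n, Finset.mem_filter.2 ⟨Finset.mem_univ _, by rw [htop]; exact le_top⟩⟩

/-- `j_A^B : {0,…,n} → T`, sending `0` to `0̂` and `h ≥ 1` to `a_h`. -/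
def jAB {T : Type*} [Lattice T] [OrderBot T] {n : ℕ} (a : Fin n → T) :
    Fin (n + 1) → T :=
  fun h => Fin.cases ⊥ a h

/-- `ρ_Y : {0,…,n} → {0,…,n}` for `Y ⊆ {1,…,n}`: `ρ_Y(0) = 0`, `ρ_Y(h) = h` if `h ∈ Y`
and `ρ_Y(h) = h - 1` otherwise. Here `h ∈ {1,…,n}` is represented as `i.succ` with
`i : Fin n`, so that `h - 1 = i.castSucc`. -/
def rhoY {n : ℕ} (Y : Finset (Fin n)) : Fin (n + 1) → Fin (n + 1) :=
  fun h => Fin.cases 0 (fun i => if i ∈ Y then i.succ else i.castSucc) h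

/-- `μ(B,A) = ∏_{h=1}^n μ_T(b_{h-1}, a_h)`. -/
def muBA {T : Type*} [Lattice T] [Fintype T] {n : ℕ} (μ : T → T → ℤ)
    (b : Fin (n + 1) → T) (a : Fin n → T) : ℤ :=
  ∏ i : Fin n, μ (b i.castSucc) (a i)

section Helpers

variable {T : Type} [Lattice T] [Fintype T]

open Finset in
lemma filter_le_le_self (s : T) :
    Finset.univ.filter (fun u : T => s ≤ u ∧ u ≤ s) = {s} := by
  ext u; simp [le_antisymm_iff, and_comm, eq_comm]

open Finset in
lemma mu_dual (μ : T → T → ℤ) (hμ1 : ∀ t : T, μ t t = 1)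
    (hμ2 : ∀ s t : T, s < t →
      ∑ u ∈ Finset.univ.filter (fun u : T => s ≤ u ∧ u ≤ t), μ u t = 0)
    (s t : T) (hst : s < t) :
    ∑ u ∈ Finset.univ.filter (fun u : T => s ≤ u ∧ u ≤ t), μ s u = 0 := by
  set I : T → T → Finset T := fun x y => Finset.univ.filter (fun u : T => x ≤ u ∧ u ≤ y)
    with hI
  set E : T → T → ℤ := fun x y => ∑ u ∈ I x y, μ x u with hE
  have memI : ∀ {x y u : T}, u ∈ I x y ↔ x ≤ u ∧ u ≤ y := by
    intro x y u; simp [hI]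
  have e_self : ∀ x : T, E x x = 1 := by
    intro x
    have h1 : I x x = {x} := by ext u; simp [hI, le_antisymm_iff, and_comm, eq_comm]
    show (∑ u ∈ I x x, μ x u) = 1
    rw [h1, Finset.sum_singleton, hμ1]
  -- Claim A
  have claimA : ∀ u t' : T, u ≤ t' → (∑ v ∈ I u t', E v t') = 1 := by
    intro u t' hut
    have swap : (∑ v ∈ I u t', ∑ w ∈ I v t', μ v w)
        = ∑ w ∈ I u t', ∑ v ∈ I u w, μ v w := by
      refine Finset.sum_comm' ?_
      intro v w
      simp only [memI]
      constructor
      · rintro ⟨⟨h1, h2⟩, h3, h4⟩; exact ⟨⟨h1, h3⟩, h1.trans h3, h4⟩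
      · rintro ⟨⟨h1, h3⟩, h5, h4⟩; exact ⟨⟨h1, h3.trans h4⟩, h3, h4⟩
    have inner : ∀ w ∈ I u t', (∑ v ∈ I u w, μ v w) = if w = u then 1 else 0 := by
      intro w hw
      rcases eq_or_lt_of_le (memI.mp hw).1 with h | h
      · subst h
        have h1 : I u u = {u} := by ext z; simp [hI, le_antisymm_iff, and_comm, eq_comm]
        rw [if_pos rfl, h1, Finset.sum_singleton, hμ1]
      · rw [if_neg (by rintro rfl; exact lt_irrefl _ h)]
        exact hμ2 u w h
    calc (∑ v ∈ I u t', E v t') = ∑ v ∈ I u t', ∑ w ∈ I v t', μ v w := rfl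
      _ = ∑ w ∈ I u t', ∑ v ∈ I u w, μ v w := swap
      _ = ∑ w ∈ I u t', if w = u then 1 else 0 := Finset.sum_congr rfl inner
      _ = 1 := by
          rw [Finset.sum_ite_eq' (I u t') u (fun _ => (1 : ℤ))]
          rw [if_pos (memI.mpr ⟨le_refl u, hut⟩)]
  -- main induction
  have main : ∀ N : ℕ, ∀ s t : T, s < t → (I s t).card ≤ N → E s t = 0 := by
    intro N
    induction N with
    | zero =>
        intro s t hst hcard
        exact absurd hcard (by
          simp only [not_le, Nat.pos_iff_ne_zero]
          intro h
          exact absurd (Finset.card_eq_zero.mp h ▸ memI.mpr ⟨le_refl s, hst.le⟩)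
            (Finset.notMem_empty s))
    | succ N ih =>
        intro s t hst hcard
        have hs : s ∈ I s t := memI.mpr ⟨le_refl s, hst.le⟩
        have ht : t ∈ (I s t).erase s :=
          Finset.mem_erase.mpr ⟨hst.ne', memI.mpr ⟨hst.le, le_refl t⟩⟩
        -- (a)
        have Da : (∑ v ∈ I s t, E s v * E v t) = E s t := by
          have swap : (∑ v ∈ I s t, ∑ u ∈ I s v, μ s u * E v t)
              = ∑ u ∈ I s t, ∑ v ∈ I u t, μ s u * E v t := by
            refine Finset.sum_comm' ?_
            intro v u
            simp only [memI]
            constructor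
            · rintro ⟨⟨h1, h2⟩, h3, h4⟩; exact ⟨⟨h4, h2⟩, h3, h4.trans h2⟩
            · rintro ⟨⟨h4, h2⟩, h3, h5⟩; exact ⟨⟨h3.trans h4, h2⟩, h3, h4⟩
          calc (∑ v ∈ I s t, E s v * E v t)
              = ∑ v ∈ I s t, ∑ u ∈ I s v, μ s u * E v t := by
                refine Finset.sum_congr rfl fun v _ => ?_
                rw [Finset.sum_mul]
            _ = ∑ u ∈ I s t, ∑ v ∈ I u t, μ s u * E v t := swap
            _ = ∑ u ∈ I s t, μ s u * ∑ v ∈ I u t, E v t := by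
                refine Finset.sum_congr rfl fun u _ => ?_
                rw [Finset.mul_sum]
            _ = ∑ u ∈ I s t, μ s u := by
                refine Finset.sum_congr rfl fun u hu => ?_
                rw [claimA u t (memI.mp hu).2, mul_one]
            _ = E s t := rfl
        -- (b)
        have Db : (∑ v ∈ I s t, E s v * E v t) = E s t + E s t := by
          rw [← Finset.add_sum_erase _ _ hs, ← Finset.add_sum_erase _ _ ht]
          have mid : (∑ v ∈ ((I s t).erase s).erase t, E s v * E v t) = 0 := by
            refine Finset.sum_eq_zero fun v hv => ?_
            have hvt := Finset.mem_erase.mp hv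
            have hvs := Finset.mem_erase.mp hvt.2
            obtain ⟨h1, h2⟩ := memI.mp hvs.2
            have hsv : s < v := lt_of_le_of_ne h1 (Ne.symm hvs.1)
            have hvt' : v < t := lt_of_le_of_ne h2 hvt.1
            have hsub : I s v ⊂ I s t := by
              constructor
              · intro u hu
                obtain ⟨hu1, hu2⟩ := memI.mp hu
                exact memI.mpr ⟨hu1, hu2.trans hvt'.le⟩
              · intro hsub'
                have := memI.mp (hsub' (memI.mpr ⟨hst.le, le_refl t⟩))
                exact absurd this.2 hvt'.not_ge
            have : (I s v).card ≤ N :=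
              Nat.lt_succ_iff.mp (lt_of_lt_of_le (Finset.card_lt_card hsub) hcard)
            rw [ih s v hsv this, zero_mul]
          rw [mid, add_zero, e_self, e_self, one_mul, mul_one]
        have := Da.symm.trans Db
        omega
  exact main (I s t).card s t hst le_rfl

variable [BoundedOrder T] {n : ℕ}

lemma piB_min (b : Fin (n + 1) → T) (htop : b (Fin.last n) = ⊤) (t : T) (h : Fin (n + 1))
    (h1 : t ≤ b h) (h2 : ∀ j, t ≤ b j → h ≤ j) : piB b htop t = h := by
  unfold piB
  refine le_antisymm ?_ ?_
  · exact Finset.min'_le _ h (Finset.mem_filter.mpr ⟨Finset.mem_univ h, h1⟩)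
  · exact Finset.le_min' _ _ _ (fun j hj => h2 j (Finset.mem_filter.mp hj).2)

lemma piB_bot (b : Fin (n + 1) → T) (htop : b (Fin.last n) = ⊤) :
    piB b htop ⊥ = 0 :=
  piB_min b htop ⊥ 0 bot_le (fun j _ => Fin.zero_le j)

lemma piB_apply_b (b : Fin (n + 1) → T) (hb : StrictMono b) (htop : b (Fin.last n) = ⊤)
    (h : Fin (n + 1)) : piB b htop (b h) = h :=
  piB_min b htop (b h) h le_rfl (fun j hj => hb.le_iff_le.mp hj)

lemma piB_eq_succ (b : Fin (n + 1) → T) (hb : StrictMono b) (htop : b (Fin.last n) = ⊤)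
    (i : Fin n) (t : T) (h1 : b i.castSucc ≤ t) (h2 : t ≤ b i.succ)
    (h3 : t ≠ b i.castSucc) : piB b htop t = i.succ := by
  refine piB_min b htop t i.succ h2 (fun j hj => ?_)
  by_contra hcon
  push_neg at hcon
  have hj' : j ≤ i.castSucc := by
    rw [Fin.le_def]
    rw [Fin.lt_def] at hcon
    simp only [Fin.val_succ] at hcon
    simp only [Fin.coe_castSucc]
    omega
  exact h3 (le_antisymm (hj.trans (hb.monotone hj')) h1)

lemma jAB_zero (a : Fin n → T) : jAB a 0 = ⊥ := rfl

lemma jAB_succ (a : Fin n → T) (i : Fin n) : jAB a i.succ = a i := by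
  simp [jAB]

lemma rhoY_zero (Y : Finset (Fin n)) : rhoY Y 0 = 0 := rfl

lemma rhoY_succ (Y : Finset (Fin n)) (i : Fin n) :
    rhoY Y i.succ = if i ∈ Y then i.succ else i.castSucc := by
  simp [rhoY]

lemma comp_rho (b : Fin (n + 1) → T) (hb : StrictMono b) (htop : b (Fin.last n) = ⊤)
    (a : Fin n → T) (Y : Finset (Fin n))
    (ha : ∀ i, b i.castSucc ≤ a i ∧ a i ≤ b i.succ)
    (hY : ∀ i, i ∈ Y ↔ a i ≠ b i.castSucc) :
    piB b htop ∘ jAB a = rhoY Y := by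
  funext h
  refine Fin.cases ?_ ?_ h
  · show piB b htop (jAB a 0) = rhoY Y 0
    rw [jAB_zero, rhoY_zero, piB_bot]
  · intro i
    show piB b htop (jAB a i.succ) = rhoY Y i.succ
    rw [jAB_succ, rhoY_succ]
    by_cases hi : i ∈ Y
    · rw [if_pos hi]
      exact piB_eq_succ b hb htop i (a i) (ha i).1 (ha i).2 ((hY i).mp hi)
    · rw [if_neg hi]
      have : a i = b i.castSucc := not_not.mp (fun hne => hi ((hY i).mpr hne))
      rw [this, piB_apply_b b hb htop]

lemma rhoY_univ : rhoY (Finset.univ : Finset (Fin n)) = id := by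
  funext h
  refine Fin.cases ?_ ?_ h
  · rfl
  · intro i; rw [rhoY_succ, if_pos (Finset.mem_univ i)]; rfl

lemma rho_ne_of (Y : Finset (Fin n)) (hY : Y ≠ Finset.univ) :
    ∃ i₀ : Fin n, i₀ ∉ Y ∧ ∀ h, rhoY Y h ≠ i₀.succ := by
  have hne : (Finset.univ \ Y).Nonempty := by
    rw [Finset.sdiff_nonempty]
    intro hsub
    exact hY (le_antisymm (Finset.subset_univ Y) hsub)
  set i₀ := (Finset.univ \ Y).max' hne with hi₀def
  have hi₀mem : i₀ ∈ Finset.univ \ Y := (Finset.univ \ Y).max'_mem hne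
  have hi₀ : i₀ ∉ Y := (Finset.mem_sdiff.mp hi₀mem).2
  have hmax : ∀ j, j ∉ Y → j ≤ i₀ := fun j hj =>
    Finset.le_max' _ j (Finset.mem_sdiff.mpr ⟨Finset.mem_univ j, hj⟩)
  refine ⟨i₀, hi₀, fun h => ?_⟩
  refine Fin.cases ?_ ?_ h
  · rw [rhoY_zero]; exact (Fin.succ_ne_zero i₀).symm
  · intro j
    rw [rhoY_succ]
    by_cases hj : j ∈ Y
    · rw [if_pos hj]
      intro heq
      exact hi₀ (Fin.succ_injective _ heq ▸ hj)
    · rw [if_neg hj]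
      intro heq
      have hjv : (j : ℕ) = (i₀ : ℕ) + 1 := by
        have := congrArg Fin.val heq
        simpa using this
      have hle : j ≤ i₀ := hmax j hj
      rw [Fin.le_def] at hle
      omega


lemma jAB_indep (a : Fin n → T) (i₀ : Fin n) (u : T) :
    ∀ q : Fin (n + 1), q ≠ i₀.succ → jAB (Function.update a i₀ u) q = jAB a q := by
  intro q
  refine Fin.cases ?_ ?_ q
  · intro _; rfl
  · intro j hj
    rw [jAB_succ, jAB_succ]
    exact Function.update_of_ne (fun h => hj (congrArg Fin.succ h)) u a


lemma coord_sum (μ : T → T → ℤ) (hμ1 : ∀ t : T, μ t t = 1)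
    (hμ2 : ∀ s t : T, s < t →
      ∑ u ∈ Finset.univ.filter (fun u : T => s ≤ u ∧ u ≤ t), μ u t = 0)
    (b : Fin (n + 1) → T) (hb : StrictMono b) (i : Fin n) :
    ∑ u ∈ Finset.univ.filter
        (fun u => (b i.castSucc ≤ u ∧ u ≤ b i.succ) ∧ u ≠ b i.castSucc),
      μ (b i.castSucc) u = -1 := by
  have hlt : b i.castSucc < b i.succ := hb (Fin.castSucc_lt_succ : i.castSucc < i.succ)
  have hset : Finset.univ.filter
        (fun u => (b i.castSucc ≤ u ∧ u ≤ b i.succ) ∧ u ≠ b i.castSucc)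
      = (Finset.univ.filter (fun u => b i.castSucc ≤ u ∧ u ≤ b i.succ)).erase
          (b i.castSucc) := by
    ext u
    simp only [Finset.mem_filter, Finset.mem_erase, Finset.mem_univ, true_and]
    tauto
  have hmem : b i.castSucc ∈ Finset.univ.filter
      (fun u => b i.castSucc ≤ u ∧ u ≤ b i.succ) := by
    simp [hlt.le]
  have h0 := mu_dual μ hμ1 hμ2 _ _ hlt
  have hsplit := Finset.add_sum_erase _ (fun u => μ (b i.castSucc) u) hmem
  beta_reduce at hsplit
  rw [h0, hμ1] at hsplit
  rw [hset]
  omega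

lemma key_sum (μ : T → T → ℤ) (hμ1 : ∀ t : T, μ t t = 1)
    (hμ2 : ∀ s t : T, s < t →
      ∑ u ∈ Finset.univ.filter (fun u : T => s ≤ u ∧ u ≤ t), μ u t = 0)
    (b : Fin (n + 1) → T) (hb : StrictMono b) (htop : b (Fin.last n) = ⊤)
    {M : Type*} [AddCommGroup M] (F : (Fin (n + 1) → Fin (n + 1)) → M) :
    ∑ a ∈ Finset.univ.filter
        (fun a : Fin n → T => ∀ i : Fin n, b i.castSucc ≤ a i ∧ a i ≤ b i.succ),
      muBA μ b a • F (piB b htop ∘ jAB a)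
      = ∑ Y : Finset (Fin n), ((-1 : ℤ) ^ Y.card) • F (rhoY Y) := by
  classical
  set P := Finset.univ.filter
      (fun a : Fin n → T => ∀ i : Fin n, b i.castSucc ≤ a i ∧ a i ≤ b i.succ) with hP
  rw [← Finset.sum_fiberwise P
    (fun a => Finset.univ.filter fun i => a i ≠ b i.castSucc)
    (fun a => muBA μ b a • F (piB b htop ∘ jAB a))]
  refine Finset.sum_congr rfl fun Y _ => ?_
  have hmem : ∀ a : Fin n → T,
      a ∈ P.filter (fun a => Finset.univ.filter (fun i => a i ≠ b i.castSucc) = Y)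
        ↔ ((∀ i, b i.castSucc ≤ a i ∧ a i ≤ b i.succ)
            ∧ ∀ i, i ∈ Y ↔ a i ≠ b i.castSucc) := by
    intro a
    simp only [Finset.mem_filter, Finset.mem_univ, true_and, hP]
    constructor
    · rintro ⟨h1, h2⟩
      refine ⟨h1, fun i => ?_⟩
      rw [← h2]
      simp
    · rintro ⟨h1, h2⟩
      refine ⟨h1, ?_⟩
      ext i
      simp [h2 i]
  have hsum : ∑ a ∈ P.filter
        (fun a => Finset.univ.filter (fun i => a i ≠ b i.castSucc) = Y),
      muBA μ b a = (-1 : ℤ) ^ Y.card := by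
    have hfib : P.filter
          (fun a => Finset.univ.filter (fun i => a i ≠ b i.castSucc) = Y)
        = Fintype.piFinset (fun i => if i ∈ Y then
            Finset.univ.filter
              (fun u => (b i.castSucc ≤ u ∧ u ≤ b i.succ) ∧ u ≠ b i.castSucc)
            else {b i.castSucc}) := by
      ext a
      rw [hmem a, Fintype.mem_piFinset]
      constructor
      · rintro ⟨h1, h2⟩ i
        by_cases hi : i ∈ Y
        · rw [if_pos hi]
          exact Finset.mem_filter.mpr
            ⟨Finset.mem_univ _, ⟨(h1 i).1, (h1 i).2⟩, (h2 i).mp hi⟩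
        · rw [if_neg hi, Finset.mem_singleton]
          exact not_not.mp (fun hne => hi ((h2 i).mpr hne))
      · intro h
        constructor
        · intro i
          by_cases hi : i ∈ Y
          · have := h i; rw [if_pos hi] at this
            exact (Finset.mem_filter.mp this).2.1
          · have := h i; rw [if_neg hi, Finset.mem_singleton] at this
            rw [this]
            exact ⟨le_rfl, (hb (Fin.castSucc_lt_succ : i.castSucc < i.succ)).le⟩
        · intro i
          constructor
          · intro hi
            have := h i; rw [if_pos hi] at this
            exact (Finset.mem_filter.mp this).2.2
          · intro hne
            by_contra hi
            have := h i; rw [if_neg hi, Finset.mem_singleton] at this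
            exact hne this
    rw [hfib]
    have : ∑ a ∈ Fintype.piFinset (fun i => if i ∈ Y then
            Finset.univ.filter
              (fun u => (b i.castSucc ≤ u ∧ u ≤ b i.succ) ∧ u ≠ b i.castSucc)
            else {b i.castSucc}),
          muBA μ b a
        = ∏ i : Fin n, ∑ u ∈ (if i ∈ Y then
            Finset.univ.filter
              (fun u => (b i.castSucc ≤ u ∧ u ≤ b i.succ) ∧ u ≠ b i.castSucc)
            else {b i.castSucc}), μ (b i.castSucc) u := by
      rw [Finset.prod_univ_sum]
      rfl
    rw [this]
    have hcoord : ∀ i : Fin n, (∑ u ∈ (if i ∈ Y then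
            Finset.univ.filter
              (fun u => (b i.castSucc ≤ u ∧ u ≤ b i.succ) ∧ u ≠ b i.castSucc)
            else {b i.castSucc}), μ (b i.castSucc) u)
        = if i ∈ Y then (-1 : ℤ) else 1 := by
      intro i
      by_cases hi : i ∈ Y
      · rw [if_pos hi, if_pos hi]
        exact coord_sum μ hμ1 hμ2 b hb i
      · rw [if_neg hi, if_neg hi, Finset.sum_singleton, hμ1]
    rw [Finset.prod_congr rfl (fun i _ => hcoord i)]
    rw [Finset.prod_ite, Finset.prod_const, Finset.prod_const_one, mul_one,
      Finset.filter_univ_mem]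
  calc ∑ a ∈ P.filter
        (fun a => Finset.univ.filter (fun i => a i ≠ b i.castSucc) = Y),
      muBA μ b a • F (piB b htop ∘ jAB a)
      = ∑ a ∈ P.filter
          (fun a => Finset.univ.filter (fun i => a i ≠ b i.castSucc) = Y),
        muBA μ b a • F (rhoY Y) := by
        refine Finset.sum_congr rfl fun a ha => ?_
        rw [comp_rho b hb htop a Y ((hmem a).mp ha).1
          (fun i => ((hmem a).mp ha).2 i)]
    _ = (∑ a ∈ P.filter
          (fun a => Finset.univ.filter (fun i => a i ≠ b i.castSucc) = Y),
        muBA μ b a) • F (rhoY Y) := (Finset.sum_smul).symm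
    _ = ((-1 : ℤ) ^ Y.card) • F (rhoY Y) := by rw [hsum]

lemma vanish (μ : T → T → ℤ) (hμ1 : ∀ t : T, μ t t = 1)
    (hμ2 : ∀ s t : T, s < t →
      ∑ u ∈ Finset.univ.filter (fun u : T => s ≤ u ∧ u ≤ t), μ u t = 0)
    (b : Fin (n + 1) → T) (hb : StrictMono b) (i₀ : Fin n)
    {M : Type*} [AddCommGroup M] (F : (Fin n → T) → M)
    (hF : ∀ a u, F (Function.update a i₀ u) = F a) :
    ∑ a ∈ Finset.univ.filter
        (fun a : Fin n → T => ∀ i : Fin n, b i.castSucc ≤ a i ∧ a i ≤ b i.succ),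
      muBA μ b a • F a = 0 := by
  classical
  set P := Finset.univ.filter
      (fun a : Fin n → T => ∀ i : Fin n, b i.castSucc ≤ a i ∧ a i ≤ b i.succ) with hP
  have hmap : ∀ a ∈ P, Function.update a i₀ (b i₀.castSucc) ∈ P := by
    intro a ha
    rw [hP, Finset.mem_filter] at ha ⊢
    refine ⟨Finset.mem_univ _, fun i => ?_⟩
    by_cases hi : i = i₀
    · subst hi
      rw [Function.update_self]
      exact ⟨le_rfl, (hb (Fin.castSucc_lt_succ : i.castSucc < i.succ)).le⟩
    · rw [Function.update_of_ne hi]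
      exact ha.2 i
  rw [← Finset.sum_fiberwise_of_maps_to hmap (fun a => muBA μ b a • F a)]
  refine Finset.sum_eq_zero fun a₀ ha₀ => ?_
  by_cases h0 : a₀ i₀ = b i₀.castSucc
  · have ha₀P := (Finset.mem_filter.mp ha₀).2
    have himg : P.filter (fun a => Function.update a i₀ (b i₀.castSucc) = a₀)
        = (Finset.univ.filter
            (fun u => b i₀.castSucc ≤ u ∧ u ≤ b i₀.succ)).image
              (fun u => Function.update a₀ i₀ u) := by
      ext a
      simp only [Finset.mem_filter, Finset.mem_image, Finset.mem_univ, true_and, hP]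
      constructor
      · rintro ⟨h1, h2⟩
        refine ⟨a i₀, h1 i₀, ?_⟩
        funext j
        by_cases hj : j = i₀
        · subst hj; rw [Function.update_self]
        · rw [Function.update_of_ne hj, ← h2, Function.update_of_ne hj]
      · rintro ⟨u, hu, rfl⟩
        constructor
        · intro i
          by_cases hi : i = i₀
          · subst hi; rw [Function.update_self]; exact hu
          · rw [Function.update_of_ne hi]; exact ha₀P i
        · funext j
          by_cases hj : j = i₀
          · subst hj
            rw [Function.update_self]
            exact h0.symm
          · rw [Function.update_of_ne hj, Function.update_of_ne hj]
    have hinj : ∀ u ∈ Finset.univ.filter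
        (fun u => b i₀.castSucc ≤ u ∧ u ≤ b i₀.succ), ∀ v ∈ Finset.univ.filter
        (fun u => b i₀.castSucc ≤ u ∧ u ≤ b i₀.succ),
        Function.update a₀ i₀ u = Function.update a₀ i₀ v → u = v := by
      intro u _ v _ h
      have := congrFun h i₀
      rwa [Function.update_self, Function.update_self] at this
    rw [himg, Finset.sum_image hinj]
    have hC : ∀ u, muBA μ b (Function.update a₀ i₀ u)
        = μ (b i₀.castSucc) u
            * ∏ i ∈ Finset.univ.erase i₀, μ (b i.castSucc) (a₀ i) := by
      intro u
      show (∏ i : Fin n, μ (b i.castSucc) (Function.update a₀ i₀ u i)) = _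
      rw [← Finset.mul_prod_erase Finset.univ _ (Finset.mem_univ i₀),
        Function.update_self]
      congr 1
      refine Finset.prod_congr rfl fun i hi => ?_
      rw [Function.update_of_ne (Finset.mem_erase.mp hi).1]
    calc ∑ u ∈ Finset.univ.filter
            (fun u => b i₀.castSucc ≤ u ∧ u ≤ b i₀.succ),
          muBA μ b (Function.update a₀ i₀ u) • F (Function.update a₀ i₀ u)
        = ∑ u ∈ Finset.univ.filter
            (fun u => b i₀.castSucc ≤ u ∧ u ≤ b i₀.succ),
          (μ (b i₀.castSucc) u
            * ∏ i ∈ Finset.univ.erase i₀, μ (b i.castSucc) (a₀ i)) • F a₀ := by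
          refine Finset.sum_congr rfl fun u _ => ?_
          rw [hC u, hF a₀ u]
      _ = ((∑ u ∈ Finset.univ.filter
            (fun u => b i₀.castSucc ≤ u ∧ u ≤ b i₀.succ), μ (b i₀.castSucc) u)
            * ∏ i ∈ Finset.univ.erase i₀, μ (b i.castSucc) (a₀ i)) • F a₀ := by
          rw [← Finset.sum_smul, ← Finset.sum_mul]
      _ = 0 := by
          rw [mu_dual μ hμ1 hμ2 _ _ (hb (Fin.castSucc_lt_succ : i₀.castSucc < i₀.succ)), zero_mul,
            zero_smul]
  · have hempty : P.filter (fun a => Function.update a i₀ (b i₀.castSucc) = a₀) = ∅ := by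
      refine Finset.filter_eq_empty_iff.mpr fun a _ h => h0 ?_
      rw [← h, Function.update_self]
    rw [hempty, Finset.sum_empty]

end Helpers

/-- **Statement 18.** (i) The identity
`∑_A μ(B,A)·(π^B ∘ j_A^B) = ∑_{Y ⊆ [n]} (-1)^{|Y|}·ρ_Y` holds in the free `k`-module on
maps `{0,…,n} → {0,…,n}` (all the maps occurring here are join-preserving, so this is
the asserted identity in the free `k`-module on join-preserving maps).
(ii) The element `(-1)^n ∑_A μ(B,A)·(j_A^B ∘ π^B)` of the monoid algebra on the
composition monoid of maps `T → T` (it lies in the monoid algebra of the submonoid of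
join-preserving maps, where multiplication is the same) is idempotent. -/

theorem piB_jAB_identities (k : Type) [CommRing k]
    (T : Type) [Lattice T] [Fintype T] [BoundedOrder T]
    (μ : T → T → ℤ) (hμ1 : ∀ t : T, μ t t = 1)
    (hμ2 : ∀ s t : T, s < t →
      ∑ u ∈ Finset.univ.filter (fun u : T => s ≤ u ∧ u ≤ t), μ u t = 0)
    (n : ℕ) (b : Fin (n + 1) → T) (hb : StrictMono b) (htop : b (Fin.last n) = ⊤) :
    ((∑ a ∈ Finset.univ.filter
          (fun a : Fin n → T => ∀ i : Fin n, b i.castSucc ≤ a i ∧ a i ≤ b i.succ),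
        muBA μ b a • Finsupp.single (piB b htop ∘ jAB a) (1 : k)) =
      ∑ Y : Finset (Fin n),
        ((-1 : ℤ) ^ Y.card) • Finsupp.single (rhoY Y) (1 : k)) ∧
    IsIdempotentElem
      (((-1 : ℤ) ^ n) • ∑ a ∈ Finset.univ.filter
          (fun a : Fin n → T => ∀ i : Fin n, b i.castSucc ≤ a i ∧ a i ≤ b i.succ),
        muBA μ b a •
          MonoidAlgebra.single (M := Function.End T) (jAB a ∘ piB b htop) (1 : k)) := by
  classical
  constructor
  · exact key_sum μ hμ1 hμ2 b hb htop (fun g => Finsupp.single g (1 : k))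
  · set P := Finset.univ.filter
        (fun a : Fin n → T => ∀ i : Fin n, b i.castSucc ≤ a i ∧ a i ≤ b i.succ)
      with hP
    set S := ∑ a ∈ P, muBA μ b a •
        MonoidAlgebra.single (M := Function.End T) (jAB a ∘ piB b htop) (1 : k)
      with hS
    have hSS : S * S = ((-1 : ℤ) ^ n) • S := by
      calc S * S
          = ∑ a ∈ P, ∑ a' ∈ P,
              (muBA μ b a • MonoidAlgebra.single (M := Function.End T)
                (jAB a ∘ piB b htop) (1 : k))
              * (muBA μ b a' • MonoidAlgebra.single (M := Function.End T)
                (jAB a' ∘ piB b htop) (1 : k)) := by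
            rw [hS, Finset.sum_mul_sum]
        _ = ∑ a ∈ P, muBA μ b a • ∑ a' ∈ P, muBA μ b a' •
              MonoidAlgebra.single (M := Function.End T)
                ((jAB a ∘ (piB b htop ∘ jAB a') ∘ piB b htop : T → T)) (1 : k) := by
            refine Finset.sum_congr rfl fun a _ => ?_
            rw [Finset.smul_sum]
            refine Finset.sum_congr rfl fun a' _ => ?_
            rw [smul_mul_assoc, mul_smul_comm]
            congr 2
            exact (MonoidAlgebra.single_mul_single (M := Function.End T) _ _ _ _).trans
              (by rw [one_mul]; rfl)
        _ = ∑ a ∈ P, muBA μ b a • ∑ Y : Finset (Fin n), ((-1 : ℤ) ^ Y.card) •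
              MonoidAlgebra.single (M := Function.End T)
                ((jAB a ∘ rhoY Y ∘ piB b htop : T → T)) (1 : k) := by
            refine Finset.sum_congr rfl fun a _ => ?_
            congr 1
            exact key_sum μ hμ1 hμ2 b hb htop
              (fun g => MonoidAlgebra.single (M := Function.End T)
                ((jAB a ∘ g ∘ piB b htop : T → T)) (1 : k))
        _ = ∑ Y : Finset (Fin n), ((-1 : ℤ) ^ Y.card) • ∑ a ∈ P, muBA μ b a •
              MonoidAlgebra.single (M := Function.End T)
                ((jAB a ∘ rhoY Y ∘ piB b htop : T → T)) (1 : k) := by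
            rw [Finset.sum_congr rfl (fun a (_ : a ∈ P) => Finset.smul_sum
              (r := muBA μ b a)
              (f := fun Y => ((-1 : ℤ) ^ Finset.card Y) •
                MonoidAlgebra.single (M := Function.End T)
                  ((jAB a ∘ rhoY Y ∘ piB b htop : T → T)) (1 : k)))]
            rw [Finset.sum_comm]
            refine Finset.sum_congr rfl fun Y _ => ?_
            rw [Finset.smul_sum]
            refine Finset.sum_congr rfl fun a _ => ?_
            rw [smul_comm]
        _ = ((-1 : ℤ) ^ n) • S := by
            refine (Finset.sum_eq_single Finset.univ ?_ ?_).trans ?_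
            · intro Y _ hY
              obtain ⟨i₀, hi₀, hne⟩ := rho_ne_of Y hY
              have hzero : ∑ a ∈ P, muBA μ b a •
                  MonoidAlgebra.single (M := Function.End T)
                    ((jAB a ∘ rhoY Y ∘ piB b htop : T → T)) (1 : k) = 0 := by
                refine vanish μ hμ1 hμ2 b hb i₀
                  (fun a => MonoidAlgebra.single (M := Function.End T)
                    ((jAB a ∘ rhoY Y ∘ piB b htop : T → T)) (1 : k)) ?_
                intro a u
                have hcomp : (jAB (Function.update a i₀ u) ∘ rhoY Y ∘ piB b htop
                      : T → T) = (jAB a ∘ rhoY Y ∘ piB b htop : T → T) :=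
                  funext fun t => jAB_indep a i₀ u (rhoY Y (piB b htop t)) (hne _)
                exact congrArg
                  (fun f : Function.End T => MonoidAlgebra.single f (1 : k)) hcomp
              rw [hzero, smul_zero]
            · intro h; exact absurd (Finset.mem_univ _) h
            · rw [rhoY_univ, Finset.card_univ, Fintype.card_fin]
              rfl
    show ((-1 : ℤ) ^ n • S) * ((-1 : ℤ) ^ n • S) = (-1 : ℤ) ^ n • S
    rw [smul_mul_assoc, mul_smul_comm, hSS, smul_smul, smul_smul]
    congr 1
    have h2 : ((-1 : ℤ) ^ n) * ((-1 : ℤ) ^ n) = 1 := by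
      rw [← pow_add]; exact Even.neg_one_pow ⟨n, rfl⟩
    rw [mul_assoc, h2, mul_one]
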